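/- Let P = {Γ₁, Γ₂, …} be an infinite path in covtree and suppose Γₙ ∈ P is not a singleton. Then there exists m > n and an m-order C such that C is a certificate of Γₙ and C ∈ Γₘ, where Γₘ is the node of P at level m. -/

import Mathlib

/-- A finite labeled order: a partial order structure on `Fin n`. -/
abbrev FinOrd (n : ℕ) := PartialOrder (Fin n)

/-- Isomorphism of two orders on `Fin n`. -/
def OrdIso {n : ℕ} (p q : FinOrd n) : Prop :=
  Nonempty (p.le ≃r q.le)

instance ordSetoid (n : ℕ) : Setoid (FinOrd n) where
  r := OrdIso
  iseqv := by
    refine ⟨fun p => ⟨RelIso.refl _⟩, ?_, ?_⟩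
    · rintro p q ⟨e⟩; exact ⟨e.symm⟩
    · rintro p q r ⟨e⟩ ⟨f⟩; exact ⟨e.trans f⟩

/-- An `n`-order: an isomorphism class of partial orders of cardinality `n`. -/
def NOrder (n : ℕ) := Quotient (ordSetoid n)

/-- `B` (a partial order on `Fin n`) occurs as a stem (finite downward-closed
subcauset) in the partial order `p` on `α`. -/
def StemIn {n : ℕ} {α : Type*} (B : FinOrd n) (p : PartialOrder α) : Prop :=
  ∃ f : Fin n → α, Function.Injective f ∧
    (∀ i j : Fin n, B.le i j ↔ p.le (f i) (f j)) ∧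
    (∀ (i : Fin n) (y : α), p.lt y (f i) → ∃ j : Fin n, f j = y)

/-- The `n`-order `B` is a stem in the order `p`. -/
def QStemIn {n : ℕ} {α : Type*} (B : NOrder n) (p : PartialOrder α) : Prop :=
  ∃ b : FinOrd n, ⟦b⟧ = B ∧ StemIn b p

/-- The set of `k`-stems of `p`, as a set of `k`-orders. -/
def stems (k : ℕ) {α : Type*} (p : PartialOrder α) : Set (NOrder k) :=
  {B | QStemIn B p}

/-- Stem relation between unlabeled finite orders: `S` is a stem in `T`. -/
def NStemIn {n m : ℕ} (S : NOrder n) (T : NOrder m) : Prop :=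
  ∃ t : FinOrd m, ⟦t⟧ = T ∧ QStemIn S t

/-- An order is past-finite if every element has finitely many elements below it. -/
def PastFinite {α : Type*} (p : PartialOrder α) : Prop :=
  ∀ x : α, {y : α | p.lt y x}.Finite

/-- The operation sending a set of `n`-orders to the set of `(n-1)`-stems of its
elements. -/
def Ominus (n : ℕ) (Γ : Set (NOrder n)) : Set (NOrder (n - 1)) :=
  {B | ∃ A ∈ Γ, NStemIn B A}

/-- The `j`-fold iterate of `Ominus`. -/
def OminusIter : (j : ℕ) → (n : ℕ) → Set (NOrder n) → Set (NOrder (n - j))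
  | 0, _, Γ => Γ
  | j + 1, n, Γ => Ominus (n - j) (OminusIter j n Γ)

/-- `Γ` is a node of covtree at level `n`: it is nonempty and has a certificate,
i.e. a (finite or countably infinite) past-finite order whose set of `n`-stems
is exactly `Γ`. -/
def IsNode (n : ℕ) (Γ : Set (NOrder n)) : Prop :=
  Γ.Nonempty ∧ ∃ (α : Type) (p : PartialOrder α), Countable α ∧ PastFinite p ∧
    stems n p = Γ


/-- An infinite path in covtree, starting at the root: for each `n` a node of
covtree at level `n` (a nonempty set of `n`-orders admitting a certificate),
each node being directly below the next via the `O₋` operation.  (Level `0`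
carries the trivial node consisting of the empty order.) -/
structure CovPath where
  node : (n : ℕ) → Set (NOrder n)
  nonempty : ∀ n, (node n).Nonempty
  isNode : ∀ n, IsNode n (node n)
  link : ∀ n, Ominus (n + 1) (node (n + 1)) = node n


open Function

lemma cov_lt_iff {α : Type*} (p : PartialOrder α) (x y : α) :
    p.lt x y ↔ p.le x y ∧ ¬ p.le y x := p.lt_iff_le_not_ge x y

lemma stem_refl {n} (b : FinOrd n) : StemIn b b :=
  ⟨id, injective_id, fun _ _ => Iff.rfl, fun _ y _ => ⟨y, rfl⟩⟩

lemma stem_trans {n k : ℕ} {α : Type*} {b : FinOrd n} {t : FinOrd k} {p : PartialOrder α}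
    (h1 : StemIn b t) (h2 : StemIn t p) : StemIn b p := by
  obtain ⟨f, hf, hfiff, hfdn⟩ := h1
  obtain ⟨g, hg, hgiff, hgdn⟩ := h2
  refine ⟨g ∘ f, hg.comp hf, fun i j => (hfiff i j).trans (hgiff _ _), ?_⟩
  intro i y hy
  obtain ⟨j, hj⟩ := hgdn (f i) y hy
  have hjlt : t.lt j (f i) := by
    rw [cov_lt_iff] at hy ⊢
    rw [hgiff, hgiff, hj]
    exact hy
  obtain ⟨i', hi'⟩ := hfdn i j hjlt
  exact ⟨i', by simp only [Function.comp_apply, hi', hj]⟩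

lemma stem_congr {n : ℕ} {α β : Type*} {b : FinOrd n} {p : PartialOrder α} {q : PartialOrder β}
    (e : p.le ≃r q.le) (h : StemIn b p) : StemIn b q := by
  obtain ⟨f, hf, hiff, hdn⟩ := h
  refine ⟨fun i => e (f i), e.injective.comp hf,
    fun i j => (hiff i j).trans e.map_rel_iff.symm, ?_⟩
  intro i y hy
  have hy' : p.lt (e.symm y) (f i) := by
    rw [cov_lt_iff] at hy ⊢
    constructor
    · have := hy.1
      rw [show y = e (e.symm y) by simp] at this
      exact e.map_rel_iff.mp this
    · intro hc
      exact hy.2 (by simpa using e.map_rel_iff.mpr hc)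
  obtain ⟨j, hj⟩ := hdn i _ hy'
  exact ⟨j, by show e (f j) = y; rw [hj]; simp⟩

lemma stem_full {n k : ℕ} (h : k ≤ n) {b : FinOrd n} {c : FinOrd k} (hb : StemIn b c) :
    Nonempty (b.le ≃r c.le) := by
  obtain ⟨f, hf, hiff, -⟩ := hb
  have hcard : Fintype.card (Fin n) = Fintype.card (Fin k) := by
    have := Fintype.card_le_of_injective f hf
    simp only [Fintype.card_fin] at this ⊢
    omega
  have hbij : Bijective f := (Fintype.bijective_iff_injective_and_card f).mpr ⟨hf, hcard⟩
  exact ⟨⟨Equiv.ofBijective f hbij, fun {i j} => (hiff i j).symm⟩⟩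

def pullOrd {α β : Type*} (p : PartialOrder α) (f : β → α) (hf : Function.Injective f) :
    PartialOrder β where
  le a b := p.le (f a) (f b)
  le_refl a := p.le_refl _
  le_trans a b c h1 h2 := p.le_trans _ _ _ h1 h2
  le_antisymm a b h1 h2 := hf (p.le_antisymm _ _ h1 h2)

lemma stem_via {n k : ℕ} {α : Type*} {b : FinOrd n} {c : FinOrd k} {p : PartialOrder α}
    (f : Fin n → α) (hf : Injective f)
    (hiff : ∀ i j, b.le i j ↔ p.le (f i) (f j))
    (hdn : ∀ (i : Fin n) (y : α), p.lt y (f i) → ∃ j, f j = y)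
    (g : Fin k → α) (hg : Injective g)
    (hgiff : ∀ i j, c.le i j ↔ p.le (g i) (g j))
    (hsub : ∀ i, ∃ j, g j = f i) :
    StemIn b c := by
  choose F hF using hsub
  refine ⟨F, fun i j h => hf (by rw [← hF i, ← hF j, h]), ?_, ?_⟩
  · intro i j
    rw [hiff, hgiff, hF, hF]
  · intro i y hy
    have hy' : p.lt (g y) (f i) := by
      rw [cov_lt_iff] at hy ⊢
      rw [hgiff, hgiff, hF] at hy
      exact hy
    obtain ⟨j, hj⟩ := hdn i _ hy'
    exact ⟨j, hg (by rw [hF, hj])⟩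

lemma finset_equiv_fun {α : Type*} (s : Finset α) (k : ℕ) (h : s.card = k) :
    ∃ g : Fin k → α, Injective g ∧ (∀ i, g i ∈ s) ∧ ∀ x ∈ s, ∃ i, g i = x := by
  have e : Fin k ≃ {x // x ∈ s} := (finCongr h.symm).trans s.equivFin.symm
  refine ⟨fun i => (e i : α), ?_, fun i => (e i).2, fun x hx => ⟨e.symm ⟨x, hx⟩, by simp⟩⟩
  intro i j hij
  exact e.injective (Subtype.ext hij)

lemma restrict_lemma {α : Type*} (p : PartialOrder α) (s : Finset α)
    (hdc : ∀ x ∈ s, ∀ y, p.lt y x → y ∈ s) (k : ℕ) (h : s.card = k) :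
    ∃ (c : FinOrd k) (g : Fin k → α), Injective g ∧
      (∀ i j, c.le i j ↔ p.le (g i) (g j)) ∧
      (∀ (i : Fin k) (y : α), p.lt y (g i) → ∃ j, g j = y) ∧
      (∀ i, g i ∈ s) ∧ (∀ x ∈ s, ∃ i, g i = x) := by
  obtain ⟨g, hg, hgs, hgsurj⟩ := finset_equiv_fun s k h
  refine ⟨pullOrd p g hg, g, hg, fun _ _ => Iff.rfl, ?_, hgs, hgsurj⟩
  intro i y hy
  exact hgsurj y (hdc (g i) (hgs i) y hy)

lemma exists_extension {α : Type*} {p : PartialOrder α} {s : Finset α}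
    (hdc : ∀ x ∈ s, ∀ y, p.lt y x → y ∈ s) {x₀ : α} (hx₀ : x₀ ∉ s)
    (hfin : {y | p.lt y x₀}.Finite) :
    ∃ x, x ∉ s ∧ ∀ y, p.lt y x → y ∈ s := by
  letI := p
  classical
  set D := (insert x₀ hfin.toFinset) \ s with hD
  have hx₀D : x₀ ∈ D := by
    rw [hD, Finset.mem_sdiff]
    exact ⟨Finset.mem_insert_self _ _, hx₀⟩
  obtain ⟨x, hxD, hmin⟩ := D.exists_minimal ⟨x₀, hx₀D⟩
  have hxs : x ∉ s := (Finset.mem_sdiff.mp hxD).2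
  refine ⟨x, hxs, ?_⟩
  intro y hy
  by_contra hys
  have hxle : p.lt x x₀ ∨ x = x₀ := by
    have := (Finset.mem_sdiff.mp hxD).1
    rcases Finset.mem_insert.mp this with h | h
    · exact Or.inr h
    · exact Or.inl (by simpa using (Set.Finite.mem_toFinset hfin).mp h)
  have hyx₀ : p.lt y x₀ := by
    rcases hxle with h | h
    · exact lt_trans hy h
    · rw [← h]; exact hy
  have hyD : y ∈ D :=
    Finset.mem_sdiff.mpr ⟨Finset.mem_insert_of_mem (hfin.mem_toFinset.mpr hyx₀), hys⟩
  exact absurd (hmin hyD (le_of_lt hy)) (not_le_of_gt hy)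

lemma extend_to_card {α : Type*} {p : PartialOrder α} (hpf : PastFinite p) {m : ℕ}
    (g : Fin m → α) (hg : Injective g) :
    ∀ (d : ℕ) (s : Finset α), (∀ x ∈ s, ∀ y, p.lt y x → y ∈ s) → s.card + d = m →
      ∃ s' : Finset α, s ⊆ s' ∧ (∀ x ∈ s', ∀ y, p.lt y x → y ∈ s') ∧ s'.card = m := by
  classical
  intro d
  induction d with
  | zero =>
    intro s hdc hcard
    exact ⟨s, Finset.Subset.refl s, hdc, by omega⟩
  | succ d ih =>
    intro s hdc hcard
    have hex : ∃ x₀, x₀ ∉ s := by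
      by_contra h
      push_neg at h
      have h2 : (Finset.univ.image g).card ≤ s.card :=
        Finset.card_le_card (fun x _ => h x)
      rw [Finset.card_image_of_injective _ hg, Finset.card_univ, Fintype.card_fin] at h2
      omega
    obtain ⟨x₀, hx₀⟩ := hex
    obtain ⟨x, hxs, hxdn⟩ := exists_extension hdc hx₀ (hpf x₀)
    have hdc' : ∀ z ∈ insert x s, ∀ y, p.lt y z → y ∈ insert x s := by
      intro z hz y hy
      rcases Finset.mem_insert.mp hz with rfl | hz
      · exact Finset.mem_insert_of_mem (hxdn y hy)
      · exact Finset.mem_insert_of_mem (hdc z hz y hy)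
    have hcard' : (insert x s).card + d = m := by
      rw [Finset.card_insert_of_notMem hxs]; omega
    obtain ⟨s', h1, h2, h3⟩ := ih (insert x s) hdc' hcard'
    exact ⟨s', (Finset.subset_insert x s).trans h1, h2, h3⟩

lemma exists_mid {nn mm : ℕ} {b : FinOrd nn} {t : FinOrd mm} (h : StemIn b t) (hlt : nn < mm) :
    ∃ b' : FinOrd (nn + 1), StemIn b b' ∧ StemIn b' t := by
  classical
  obtain ⟨f, hf, hiff, hdn⟩ := h
  set s : Finset (Fin mm) := Finset.univ.image f with hs
  have hscard : s.card = nn := by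
    rw [hs, Finset.card_image_of_injective _ hf, Finset.card_univ, Fintype.card_fin]
  have hsdc : ∀ x ∈ s, ∀ y, t.lt y x → y ∈ s := by
    intro x hx y hy
    obtain ⟨i, -, rfl⟩ := Finset.mem_image.mp hx
    obtain ⟨j, hj⟩ := hdn i y hy
    exact Finset.mem_image.mpr ⟨j, Finset.mem_univ _, hj⟩
  have hex : ∃ x₀, x₀ ∉ s := by
    by_contra hcon
    push_neg at hcon
    have h2 : (Finset.univ : Finset (Fin mm)).card ≤ s.card :=
      Finset.card_le_card fun x _ => hcon x
    rw [Finset.card_univ, Fintype.card_fin, hscard] at h2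
    omega
  obtain ⟨x₀, hx₀⟩ := hex
  obtain ⟨x, hxs, hxdn⟩ := exists_extension hsdc hx₀ (Set.toFinite _)
  have hdc' : ∀ z ∈ insert x s, ∀ y, t.lt y z → y ∈ insert x s := by
    intro z hz y hy
    rcases Finset.mem_insert.mp hz with rfl | hz
    · exact Finset.mem_insert_of_mem (hxdn y hy)
    · exact Finset.mem_insert_of_mem (hsdc z hz y hy)
  have hcard' : (insert x s).card = nn + 1 := by
    rw [Finset.card_insert_of_notMem hxs, hscard]
  obtain ⟨b', g, hg, hgiff, hgdn, hgmem, hgsurj⟩ := restrict_lemma t (insert x s) hdc' (nn + 1) hcard'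
  refine ⟨b', ?_, ⟨g, hg, hgiff, hgdn⟩⟩
  exact stem_via f hf hiff hdn g hg hgiff
    (fun i => hgsurj (f i) (Finset.mem_insert_of_mem (Finset.mem_image.mpr ⟨i, Finset.mem_univ _, rfl⟩)))


instance finOrdFinite (n : ℕ) : Finite (FinOrd n) := by
  have hinj : Function.Injective (fun p : FinOrd n => (p.le : Fin n → Fin n → Prop)) := by
    intro p q h
    apply PartialOrder.ext
    intro x y
    exact iff_of_eq (congrFun (congrFun h x) y)
  exact Finite.of_injective _ hinj

instance nOrderFinite (n : ℕ) : Finite (NOrder n) := Quotient.finite _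

lemma cov_down (P : CovPath) : ∀ (d nn mm : ℕ), mm = nn + d → ∀ (b : FinOrd nn) (t : FinOrd mm),
    (⟦t⟧ : NOrder mm) ∈ P.node mm → StemIn b t → (⟦b⟧ : NOrder nn) ∈ P.node nn := by
  intro d
  induction d with
  | zero =>
    intro nn mm hm b t ht hstem
    subst hm
    have heq : (⟦b⟧ : NOrder _) = ⟦t⟧ := Quotient.sound (stem_full le_rfl hstem)
    rw [heq]
    exact ht
  | succ d ih =>
    intro nn mm hm b t ht hstem
    obtain ⟨b', hbb', hb't⟩ := exists_mid hstem (by omega)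
    have hmem : (⟦b'⟧ : NOrder (nn + 1)) ∈ P.node (nn + 1) := ih (nn + 1) mm (by omega) b' t ht hb't
    have hO : (⟦b⟧ : NOrder nn) ∈ Ominus (nn + 1) (P.node (nn + 1)) :=
      ⟨⟦b'⟧, hmem, b', rfl, b, rfl, hbb'⟩
    rw [← P.link nn]
    exact hO

lemma cov_up (P : CovPath) (n : ℕ) : ∀ (d mm : ℕ), mm = n + d → ∀ B ∈ P.node n,
    ∃ t : FinOrd mm, (⟦t⟧ : NOrder mm) ∈ P.node mm ∧
      ∃ b : FinOrd n, (⟦b⟧ : NOrder n) = B ∧ StemIn b t := by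
  intro d
  induction d with
  | zero =>
    intro mm hm B hB
    subst hm
    obtain ⟨b, rfl⟩ := Quotient.exists_rep B
    exact ⟨b, hB, b, rfl, stem_refl b⟩
  | succ d ih =>
    intro mm hm B hB
    obtain ⟨t, ht, b, hb, hst⟩ := ih (n + d) rfl B hB
    rw [← P.link (n + d)] at ht
    obtain ⟨A, hA, t', ht', t₂, ht₂, hstem₂⟩ := ht
    obtain ⟨e⟩ := Quotient.exact ht₂
    have hbt₂ : StemIn b t₂ := stem_congr e.symm hst
    subst hm
    refine ⟨t', ?_, b, hb, stem_trans hbt₂ hstem₂⟩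
    show (⟦t'⟧ : NOrder (n + d + 1)) ∈ P.node (n + d + 1)
    rw [ht']
    exact hA

/-- Let `P` be an infinite path in covtree and suppose the
node `Γₙ` of `P` at level `n` is not a singleton.  Then there exist `m > n` and
an `m`-order `C` such that `C` is a certificate of `Γₙ` (the set of `n`-stems
of `C` is exactly `Γₙ`) and `C` is an element of the node of `P` at level `m`. -/
theorem path_node_contains_certificate (P : CovPath) (n : ℕ)
    (hns : ¬ ∃ B : NOrder n, P.node n = {B}) :
    ∃ m : ℕ, n < m ∧ ∃ c : FinOrd m,
      (⟦c⟧ : NOrder m) ∈ P.node m ∧ stems n c = P.node n := by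
  classical
  obtain ⟨B₁, hB₁⟩ := P.nonempty n
  have hB₂ : ∃ B₂ ∈ P.node n, B₂ ≠ B₁ := by
    by_contra h
    push_neg at h
    exact hns ⟨B₁, Set.eq_singleton_iff_unique_mem.mpr ⟨hB₁, h⟩⟩
  obtain ⟨B₂, hB₂mem, hB₂ne⟩ := hB₂
  have hfin : (P.node n).Finite := Set.toFinite _
  set Γfin : Finset (NOrder n) := hfin.toFinset with hΓfin
  set m : ℕ := n * Γfin.card + n + 1 with hmdef
  obtain ⟨-, α, p, hcnt, hpf, hstems⟩ := P.isNode m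
  obtain ⟨A₀, hA₀⟩ := P.nonempty m
  have hA₀' : A₀ ∈ stems m p := by rw [hstems]; exact hA₀
  obtain ⟨t₀, ht₀, g₀, hg₀, -, -⟩ := hA₀'
  have key : stems n p = P.node n := by
    apply Set.Subset.antisymm
    · rintro B ⟨b, rfl, f, hf, hiff, hdn⟩
      set s₀ : Finset α := Finset.univ.image f with hs₀
      have hs₀card : s₀.card = n := by
        rw [hs₀, Finset.card_image_of_injective _ hf, Finset.card_univ, Fintype.card_fin]
      have hs₀dc : ∀ x ∈ s₀, ∀ y, p.lt y x → y ∈ s₀ := by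
        intro x hx y hy
        obtain ⟨i, -, rfl⟩ := Finset.mem_image.mp hx
        obtain ⟨j, hj⟩ := hdn i y hy
        exact Finset.mem_image.mpr ⟨j, Finset.mem_univ _, hj⟩
      obtain ⟨s₁, hsub, hs₁dc, hs₁card⟩ := extend_to_card hpf g₀ hg₀ (m - n) s₀ hs₀dc (by omega)
      obtain ⟨t, g, hg, hgiff, hgdn, hgmem, hgsurj⟩ := restrict_lemma p s₁ hs₁dc m hs₁card
      have htmem : (⟦t⟧ : NOrder m) ∈ P.node m := by
        rw [← hstems]; exact ⟨t, rfl, g, hg, hgiff, hgdn⟩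
      have hbt : StemIn b t := stem_via f hf hiff hdn g hg hgiff
        (fun i => hgsurj (f i) (hsub (Finset.mem_image.mpr ⟨i, Finset.mem_univ _, rfl⟩)))
      exact cov_down P (m - n) n m (by omega) b t htmem hbt
    · intro B hB
      obtain ⟨t, htmem, b, hb, hbt⟩ := cov_up P n (m - n) m (by omega) B hB
      have ht' : (⟦t⟧ : NOrder m) ∈ stems m p := by rw [hstems]; exact htmem
      obtain ⟨t₂, ht₂, hst₂⟩ := ht'
      obtain ⟨e⟩ := Quotient.exact ht₂
      exact ⟨b, hb, stem_trans (stem_congr e.symm hbt) hst₂⟩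
  have hreal : ∀ B : NOrder n, ∃ bf : FinOrd n × (Fin n → α), B ∈ P.node n →
      (⟦bf.1⟧ : NOrder n) = B ∧ Injective bf.2 ∧
      (∀ i j, bf.1.le i j ↔ p.le (bf.2 i) (bf.2 j)) ∧
      (∀ (i : Fin n) (y : α), p.lt y (bf.2 i) → ∃ j, bf.2 j = y) := by
    intro B
    by_cases hB : B ∈ P.node n
    · have hB' : B ∈ stems n p := by rw [key]; exact hB
      obtain ⟨b, hb, f, hf, hiff, hdn⟩ := hB'
      exact ⟨(b, f), fun _ => ⟨hb, hf, hiff, hdn⟩⟩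
    · exact ⟨(Quotient.out B, fun _ => g₀ ⟨0, by omega⟩), fun h => absurd h hB⟩
  choose F hF using hreal
  set s : Finset α := Γfin.biUnion (fun B => Finset.univ.image (F B).2) with hsdef
  have hmemnode : ∀ B ∈ Γfin, B ∈ P.node n := fun B hB => hfin.mem_toFinset.mp hB
  have hsdc : ∀ x ∈ s, ∀ y, p.lt y x → y ∈ s := by
    intro x hx y hy
    rw [hsdef, Finset.mem_biUnion] at hx
    obtain ⟨B, hBmem, hx⟩ := hx
    obtain ⟨i, -, rfl⟩ := Finset.mem_image.mp hx
    obtain ⟨-, -, -, hdn⟩ := hF B (hmemnode B hBmem)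
    obtain ⟨j, hj⟩ := hdn i y hy
    rw [hsdef, Finset.mem_biUnion]
    exact ⟨B, hBmem, Finset.mem_image.mpr ⟨j, Finset.mem_univ _, hj⟩⟩
  have hscard_le : s.card ≤ m := by
    have h1 : s.card ≤ ∑ B ∈ Γfin, (Finset.univ.image (F B).2).card := Finset.card_biUnion_le
    have h2 : ∀ B ∈ Γfin, (Finset.univ.image (F B).2).card ≤ n := by
      intro B hB
      calc (Finset.univ.image (F B).2).card
          ≤ (Finset.univ : Finset (Fin n)).card := Finset.card_image_le
        _ = n := by rw [Finset.card_univ, Fintype.card_fin]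
    have h3 : ∑ B ∈ Γfin, (Finset.univ.image (F B).2).card ≤ ∑ _B ∈ Γfin, n :=
      Finset.sum_le_sum h2
    rw [Finset.sum_const, smul_eq_mul] at h3
    have h4 : Γfin.card * n = n * Γfin.card := mul_comm _ _
    omega
  obtain ⟨c, gc, hgc, hgciff, hgcdn, hgcmem, hgcsurj⟩ := restrict_lemma p s hsdc s.card rfl
  have hcert : stems n c = P.node n := by
    apply Set.Subset.antisymm
    · rintro B ⟨b, rfl, hbc⟩
      rw [← key]
      exact ⟨b, rfl, stem_trans hbc ⟨gc, hgc, hgciff, hgcdn⟩⟩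
    · intro B hB
      obtain ⟨hb1, hf2, hiff2, hdn2⟩ := hF B hB
      have hBΓ : B ∈ Γfin := hfin.mem_toFinset.mpr hB
      have hmem2 : ∀ i, (F B).2 i ∈ s := by
        intro i
        rw [hsdef, Finset.mem_biUnion]
        exact ⟨B, hBΓ, Finset.mem_image.mpr ⟨i, Finset.mem_univ _, rfl⟩⟩
      have hstem : StemIn (F B).1 c := stem_via (F B).2 hf2 hiff2 hdn2 gc hgc hgciff
        (fun i => hgcsurj _ (hmem2 i))
      exact ⟨(F B).1, hb1, hstem⟩
  have hnlt : n < s.card := by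
    rcases Nat.lt_or_ge n s.card with h | h
    · exact h
    · exfalso
      have hiso : ∀ B ∈ P.node n, ∃ b : FinOrd n,
          (⟦b⟧ : NOrder n) = B ∧ Nonempty (b.le ≃r c.le) := by
        intro B hB
        rw [← hcert] at hB
        obtain ⟨b, hb, hbc⟩ := hB
        exact ⟨b, hb, stem_full h hbc⟩
      obtain ⟨b₁, hb₁, ⟨e₁⟩⟩ := hiso B₁ hB₁
      obtain ⟨b₂, hb₂, ⟨e₂⟩⟩ := hiso B₂ hB₂mem
      apply hB₂ne
      rw [← hb₁, ← hb₂]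
      exact Quotient.sound ⟨e₂.trans e₁.symm⟩
  obtain ⟨s', hssub, hs'dc, hs'card⟩ := extend_to_card hpf g₀ hg₀ (m - s.card) s hsdc (by omega)
  obtain ⟨t, gt, hgt, hgtiff, hgtdn, hgtmem, hgtsurj⟩ := restrict_lemma p s' hs'dc m hs'card
  have htmem : (⟦t⟧ : NOrder m) ∈ P.node m := by
    rw [← hstems]; exact ⟨t, rfl, gt, hgt, hgtiff, hgtdn⟩
  have hct : StemIn c t := stem_via gc hgc hgciff hgcdn gt hgt hgtiff
    (fun i => hgtsurj _ (hssub (hgcmem i)))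
  have hcmem : (⟦c⟧ : NOrder s.card) ∈ P.node s.card :=
    cov_down P (m - s.card) s.card m (by omega) c t htmem hct
  exact ⟨s.card, hnlt, c, hcmem, hcert⟩
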